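/- Suppose u is a spectrally extremal vertex of X, u and v are strongly cospectral, and p(x) is the polynomial of degree g = d(u,v) satisfying p(A) e_u = e_v and p(θ_r) ∈ {+1,−1} for all θ_r ∈ Φ_u. Let X' be the connected component of X \ v containing u and let A' be its adjacency matrix. Then p(A') e_u = 0, and every nonzero polynomial q with q(A') e_u = 0 has degree at least g; that is, up to a nonzero constant, p is the minimal polynomial of A' relative to e_u. -/

import Mathlib

open Matrix Finset Polynomial

variable {V : Type*}

/-- The eccentricity of a vertex: maximum graph distance to any vertex. -/
noncomputable def ecc [Fintype V] (X : SimpleGraph V) (u : V) : ℕ :=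
  Finset.univ.sup fun w => X.dist u w

/-- The standard basis vector of a vertex. -/
def eVec [DecidableEq V] (u : V) : V → ℝ := Pi.single u 1

/-- `SpectralDecomp X d θ E` : `θ 0 > θ 1 > ... > θ d` are the distinct eigenvalues of the
adjacency matrix of `X` and `E r` is the orthogonal projection onto the `θ r`-eigenspace. -/
structure SpectralDecomp [Fintype V] [DecidableEq V] (X : SimpleGraph V) [DecidableRel X.Adj]
    (d : ℕ) (θ : Fin (d + 1) → ℝ) (E : Fin (d + 1) → Matrix V V ℝ) : Prop where
  decomp : X.adjMatrix ℝ = ∑ r, θ r • E r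
  sum_eq_one : ∑ r, E r = 1
  orth : ∀ r s, E r * E s = if r = s then E r else 0
  symm : ∀ r, (E r)ᵀ = E r
  strict_anti : ∀ r s : Fin (d + 1), r < s → θ s < θ r
  proj_ne_zero : ∀ r, E r ≠ 0

open scoped Classical in
/-- The (index set of the) eigenvalue support of a vertex `u`:
those `r` with `E r * e_u ≠ 0`. -/
noncomputable def suppIdx [Fintype V] [DecidableEq V] {d : ℕ}
    (E : Fin (d + 1) → Matrix V V ℝ) (u : V) : Finset (Fin (d + 1)) :=
  Finset.univ.filter fun r => E r *ᵥ eVec u ≠ 0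

/-- The dual degree `d*(u) = |Φ_u| - 1`. -/
noncomputable def dualDeg [Fintype V] [DecidableEq V] {d : ℕ}
    (E : Fin (d + 1) → Matrix V V ℝ) (u : V) : ℕ :=
  (suppIdx E u).card - 1

/-- A vertex is spectrally extremal if its eccentricity equals its dual degree. -/
noncomputable def SpectrallyExtremal [Fintype V] [DecidableEq V] (X : SimpleGraph V) {d : ℕ}
    (E : Fin (d + 1) → Matrix V V ℝ) (u : V) : Prop :=
  ecc X u = dualDeg E u

/-- Vertices are cospectral if the diagonal entries of all spectral projections agree. -/
def Cospectral [Fintype V] [DecidableEq V] {d : ℕ}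
    (E : Fin (d + 1) → Matrix V V ℝ) (u v : V) : Prop :=
  ∀ r, E r u u = E r v v

/-- Vertices are strongly cospectral if `E r e_u = ± E r e_v` for every `r`. -/
def StronglyCospectral [Fintype V] [DecidableEq V] {d : ℕ}
    (E : Fin (d + 1) → Matrix V V ℝ) (u v : V) : Prop :=
  ∀ r, E r *ᵥ eVec v = E r *ᵥ eVec u ∨ E r *ᵥ eVec v = -(E r *ᵥ eVec u)

/-- `u` and `v` are antipodal vertices: they are cospectral, the distance partition of `u`
coincides with that of `v`, it is pseudo equitable (with respect to a positive Perron
eigenvector), and `{u}`, `{v}` are singleton classes at maximum distance from each other. -/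
noncomputable def Antipodal [Fintype V] [DecidableEq V] (X : SimpleGraph V) [DecidableRel X.Adj]
    {d : ℕ} (θ : Fin (d + 1) → ℝ) (E : Fin (d + 1) → Matrix V V ℝ) (u v : V) : Prop :=
  Cospectral E u v ∧
  -- the two distance partitions have the same classes
  (∀ i : ℕ, i ≤ ecc X u → ∃ j : ℕ, ∀ w, X.dist u w = i ↔ X.dist v w = j) ∧
  (∀ j : ℕ, j ≤ ecc X v → ∃ i : ℕ, ∀ w, X.dist u w = i ↔ X.dist v w = j) ∧
  -- `{u}` and `{v}` are singletons at maximum distance from each other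
  X.dist u v = ecc X u ∧ X.dist u v = ecc X v ∧
  (∀ w, X.dist u w = X.dist u v → w = v) ∧
  (∀ w, X.dist v w = X.dist u v → w = u) ∧
  -- the partition is pseudo equitable with respect to a positive eigenvector
  -- for the largest eigenvalue `θ 0`
  ∃ x : V → ℝ, (∀ w, 0 < x w) ∧ X.adjMatrix ℝ *ᵥ x = θ 0 • x ∧
    ∀ i : ℕ, ∀ w₁ w₂ : V, X.dist u w₁ = X.dist u w₂ →
      ∑ c ∈ Finset.univ.filter (fun c => X.dist u c = i),
          (X.adjMatrix ℝ) w₁ c * x c / x w₁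
        = ∑ c ∈ Finset.univ.filter (fun c => X.dist u c = i),
          (X.adjMatrix ℝ) w₂ c * x c / x w₂

/-- Perfect state transfer from `u` to `v` at time `t`:
`|(exp (i t A))_{v,u}| = 1`. -/
noncomputable def PST [Fintype V] [DecidableEq V] (X : SimpleGraph V) [DecidableRel X.Adj]
    (u v : V) (t : ℝ) : Prop :=
  ‖(NormedSpace.exp ((Complex.I * (t : ℂ)) • X.adjMatrix ℂ)) v u‖ = 1

/-- `X` is distance-regular: there are intersection numbers `a i`, `b i`, `c i` such that
any vertex `w` at distance `i` from `u` has exactly `c i` neighbours at distance `i - 1`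
from `u`, `a i` neighbours at distance `i`, and `b i` neighbours at distance `i + 1`. -/
noncomputable def IsDistanceRegular [Fintype V] (X : SimpleGraph V) [DecidableRel X.Adj] :
    Prop :=
  ∃ a b c : ℕ → ℕ, ∀ (i : ℕ) (u w : V), X.dist u w = i →
    (Finset.univ.filter (fun z => X.Adj w z ∧ X.dist u z + 1 = i)).card = c i ∧
    (Finset.univ.filter (fun z => X.Adj w z ∧ X.dist u z = i)).card = a i ∧
    (Finset.univ.filter (fun z => X.Adj w z ∧ X.dist u z = i + 1)).card = b i

variable [Fintype V] [DecidableEq V]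

/-- With `u` spectrally extremal, `u, v` strongly cospectral and `p` the
degree-`d(u,v)` polynomial with `p(A) e_u = e_v` and `p(θ_r) = ±1` on `Φ_u`: if `X'` is the
connected component of `X \ v` containing `u` (with vertex set `S`) and `A'` its adjacency
matrix, then `p(A') e_u = 0` and every nonzero `q` with `q(A') e_u = 0` has degree at least
`d(u,v)`; i.e. `p` is, up to a constant, the minimal polynomial of `A'` relative to `e_u`. -/
lemma mulVec_apply' {n : Type*} [Fintype n] (M : Matrix n n ℝ) (y : n → ℝ) (w : n) :
    (M *ᵥ y) w = ∑ z, M w z * y z := rfl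

/-- Auxiliary: `mulVec` is additive in the matrix argument (finite sums). -/
lemma sum_mulVec' {ι n m : Type*} [Fintype m] (s : Finset ι) (M : ι → Matrix n m ℝ)
    (x : m → ℝ) : (∑ k ∈ s, M k) *ᵥ x = ∑ k ∈ s, M k *ᵥ x := by
  ext w
  simp only [Matrix.mulVec, dotProduct, Finset.sum_apply, Matrix.sum_apply,
    Finset.sum_mul]
  rw [Finset.sum_comm]

theorem stmt_10 (X : SimpleGraph V) [DecidableRel X.Adj] (hconn : X.Connected)
    {d : ℕ} (θ : Fin (d + 1) → ℝ) (E : Fin (d + 1) → Matrix V V ℝ)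
    (hspec : SpectralDecomp X d θ E) (u v : V)
    (hext : SpectrallyExtremal X E u) (hsc : StronglyCospectral E u v) (hne : u ≠ v)
    (p : Polynomial ℝ) (hdeg : p.natDegree = X.dist u v)
    (hpA : (aeval (X.adjMatrix ℝ) p) *ᵥ eVec u = eVec v)
    (hpval : ∀ r ∈ suppIdx E u, p.eval (θ r) = 1 ∨ p.eval (θ r) = -1)
    (S : Finset V)
    (hS : ∀ w : V, w ∈ S ↔ ∃ q : X.Walk u w, v ∉ q.support)
    (hu : u ∈ S) :
    (aeval ((X.induce (↑S : Set V)).adjMatrix ℝ) p) *ᵥ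
        eVec (⟨u, by simpa using hu⟩ : (↑S : Set V)) = 0 ∧
      ∀ q : Polynomial ℝ, q ≠ 0 →
        (aeval ((X.induce (↑S : Set V)).adjMatrix ℝ) q) *ᵥ
            eVec (⟨u, by simpa using hu⟩ : (↑S : Set V)) = 0 →
        X.dist u v ≤ q.natDegree := by
  classical
  set u' : (↑S : Set V) := (⟨u, by simpa using hu⟩ : (↑S : Set V)) with hu'
  -- v is not in S
  have hvS : v ∉ S := by
    intro hv
    obtain ⟨q, hq⟩ := (hS v).1 hv
    exact hq q.end_mem_support
  -- S is closed under taking neighbours other than v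
  have hclose : ∀ z w : V, z ∈ S → X.Adj z w → w ≠ v → w ∈ S := by
    intro z w hz hadj hwv
    obtain ⟨q, hq⟩ := (hS z).1 hz
    refine (hS w).2 ⟨q.concat hadj, ?_⟩
    rw [SimpleGraph.Walk.support_concat]
    intro hmem
    rcases List.mem_append.1 hmem with h | h
    · exact hq h
    · exact hwv (List.mem_singleton.1 h).symm
  -- ball lemma : A^k e_u is supported within distance k of u
  have hB : ∀ k w, k < X.dist u w → ((X.adjMatrix ℝ) ^ k *ᵥ eVec u) w = 0 := by
    intro k
    induction k with
    | zero =>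
      intro w hw
      have hwu : w ≠ u := by
        rintro rfl
        simp [SimpleGraph.dist_self] at hw
      simp [eVec, Matrix.one_mulVec, Pi.single_apply, hwu]
    | succ k ih =>
      intro w hw
      rw [pow_succ', ← Matrix.mulVec_mulVec, SimpleGraph.adjMatrix_mulVec_apply]
      apply Finset.sum_eq_zero
      intro z hz
      rw [SimpleGraph.mem_neighborFinset] at hz
      apply ih
      by_contra hle
      push_neg at hle
      have h1 : X.dist z w ≤ 1 := by
        simpa using SimpleGraph.dist_le (SimpleGraph.Walk.cons hz.symm SimpleGraph.Walk.nil)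
      have ht : X.dist u w ≤ X.dist u z + X.dist z w := hconn.dist_triangle
      omega
  -- walks of length < d(u,v) from u cannot leave S
  have hC1 : ∀ k, k < X.dist u v → ∀ w, w ∉ S → ((X.adjMatrix ℝ) ^ k *ᵥ eVec u) w = 0 := by
    intro k
    induction k with
    | zero =>
      intro _ w hwS
      have hwu : w ≠ u := fun h => hwS (h ▸ hu)
      simp [eVec, Matrix.one_mulVec, Pi.single_apply, hwu]
    | succ k ih =>
      intro hk w hwS
      rw [pow_succ', ← Matrix.mulVec_mulVec, SimpleGraph.adjMatrix_mulVec_apply]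
      apply Finset.sum_eq_zero
      intro z hz
      rw [SimpleGraph.mem_neighborFinset] at hz
      by_contra h0
      have hdz : X.dist u z ≤ k := by
        by_contra hlt
        push_neg at hlt
        exact h0 (hB k z hlt)
      have hzS : z ∈ S := by
        by_contra hzS
        exact h0 (ih (by omega) z hzS)
      have hwv : w = v := by
        by_contra hwv
        exact hwS (hclose z w hzS hz.symm hwv)
      subst hwv
      have h1 : X.dist z w ≤ 1 := by
        simpa using SimpleGraph.dist_le (SimpleGraph.Walk.cons hz.symm SimpleGraph.Walk.nil)
      have ht : X.dist u w ≤ X.dist u z + X.dist z w := hconn.dist_triangle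
      omega
  -- powers of the truncated matrix agree with powers of A on S, up to degree d(u,v)
  have hC2 : ∀ k, k ≤ X.dist u v → ∀ w : (↑S : Set V),
      (((X.induce (↑S : Set V)).adjMatrix ℝ) ^ k *ᵥ eVec u') w
        = ((X.adjMatrix ℝ) ^ k *ᵥ eVec u) (w : V) := by
    intro k
    induction k with
    | zero =>
      intro _ w
      simp only [pow_zero, Matrix.one_mulVec]
      simp [eVec, Pi.single_apply, hu', Subtype.ext_iff]
    | succ k ih =>
      intro hk w
      rw [pow_succ', ← Matrix.mulVec_mulVec, pow_succ', ← Matrix.mulVec_mulVec,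
        mulVec_apply', mulVec_apply']
      simp only [SimpleGraph.adjMatrix_apply, SimpleGraph.comap_adj,
        Function.Embedding.coe_subtype]
      rw [Finset.sum_congr rfl (fun z _ => by rw [ih (by omega) z])]
      rw [Finset.sum_set_coe
        (f := fun z => (if X.Adj (w : V) z then (1:ℝ) else 0)
          * ((X.adjMatrix ℝ) ^ k *ᵥ eVec u) z) ((↑S : Set V)), Finset.toFinset_coe]
      refine Finset.sum_subset (Finset.subset_univ S) ?_
      intro z _ hz
      rw [hC1 k (by omega) z hz, mul_zero]
  -- Part 1
  have part1 : (aeval ((X.induce (↑S : Set V)).adjMatrix ℝ) p) *ᵥ eVec u' = 0 := by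
    funext w
    have hL := congrFun hpA (w : V)
    rw [aeval_eq_sum_range, sum_mulVec'] at hL
    simp only [Matrix.smul_mulVec, Finset.sum_apply, Pi.smul_apply] at hL
    rw [aeval_eq_sum_range, sum_mulVec']
    simp only [Matrix.smul_mulVec, Finset.sum_apply, Pi.smul_apply, Pi.zero_apply]
    rw [Finset.sum_congr rfl (fun k hk => by
      rw [hC2 k (by rw [Finset.mem_range] at hk; omega) w])]
    rw [hL]
    have hwv : (w : V) ≠ v := fun h => hvS (h ▸ (by simpa using w.2))
    simp [eVec, Pi.single_apply, hwv]
  -- spectral decomposition of powers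
  have hpow : ∀ n : ℕ, (X.adjMatrix ℝ) ^ n = ∑ r, (θ r) ^ n • E r := by
    intro n
    induction n with
    | zero => simpa using hspec.sum_eq_one.symm
    | succ n ih =>
      rw [pow_succ, ih, hspec.decomp, Finset.sum_mul_sum]
      rw [Finset.sum_congr rfl (fun r _ => Finset.sum_congr rfl (fun s _ => by
        rw [Matrix.smul_mul, Matrix.mul_smul, hspec.orth, smul_smul]))]
      refine Finset.sum_congr rfl fun r _ => ?_
      rw [Finset.sum_eq_single r (fun s _ hs => by simp [Ne.symm hs]) (by simp)]
      simp [pow_succ]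
  have haeval : ∀ q : Polynomial ℝ,
      (aeval (X.adjMatrix ℝ) q) = ∑ r, q.eval (θ r) • E r := by
    intro q
    rw [aeval_eq_sum_range]
    rw [Finset.sum_congr rfl (fun k _ => by rw [hpow k, Finset.smul_sum])]
    rw [Finset.sum_comm]
    refine Finset.sum_congr rfl fun r _ => ?_
    rw [eval_eq_sum_range, Finset.sum_smul]
    exact Finset.sum_congr rfl fun k _ => smul_smul _ _ _
  -- Part 2
  refine ⟨part1, ?_⟩
  intro q hq hq0
  by_contra hlt
  push_neg at hlt
  have hqA : (aeval (X.adjMatrix ℝ) q) *ᵥ eVec u = 0 := by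
    funext w
    rw [aeval_eq_sum_range, sum_mulVec']
    simp only [Matrix.smul_mulVec, Finset.sum_apply, Pi.smul_apply, Pi.zero_apply]
    by_cases hw : w ∈ S
    · have hthis := congrFun hq0 (⟨w, by simpa using hw⟩ : (↑S : Set V))
      rw [aeval_eq_sum_range, sum_mulVec'] at hthis
      simp only [Matrix.smul_mulVec, Finset.sum_apply, Pi.smul_apply,
        Pi.zero_apply] at hthis
      rw [← hthis]
      refine Finset.sum_congr rfl fun k hk => ?_
      rw [Finset.mem_range] at hk
      rw [hC2 k (by omega) (⟨w, by simpa using hw⟩ : (↑S : Set V))]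
    · apply Finset.sum_eq_zero
      intro k hk
      rw [Finset.mem_range] at hk
      rw [hC1 k (by omega) w hw, smul_zero]
  have hroot : ∀ r ∈ suppIdx E u, q.eval (θ r) = 0 := by
    intro r hr
    have hrne : E r *ᵥ eVec u ≠ 0 := by
      simpa [suppIdx] using hr
    have h2 : E r *ᵥ ((aeval (X.adjMatrix ℝ) q) *ᵥ eVec u) = 0 := by
      rw [hqA, Matrix.mulVec_zero]
    rw [haeval q, Matrix.mulVec_mulVec, Finset.mul_sum] at h2
    rw [Finset.sum_congr rfl (fun s _ => by
      rw [Matrix.mul_smul, hspec.orth r s])] at h2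
    rw [Finset.sum_eq_single r (fun s _ hs => by simp [Ne.symm hs]) (by simp)] at h2
    simp only [if_pos rfl, Matrix.smul_mulVec] at h2
    rcases smul_eq_zero.1 h2 with h | h
    · exact h
    · exact absurd h hrne
  -- counting roots
  have h1 : X.dist u v ≤ ecc X u := Finset.le_sup (Finset.mem_univ v)
  have h2 : (suppIdx E u).Nonempty := by
    by_contra hno
    rw [Finset.not_nonempty_iff_eq_empty] at hno
    have hall : ∀ r, E r *ᵥ eVec u = 0 := by
      intro r
      by_contra h
      have hrs : r ∈ suppIdx E u := by simpa [suppIdx] using h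
      rw [hno] at hrs
      exact absurd hrs (Finset.notMem_empty r)
    have he : eVec u = (0 : V → ℝ) := by
      calc eVec u = (1 : Matrix V V ℝ) *ᵥ eVec u := (Matrix.one_mulVec _).symm
        _ = (∑ r, E r) *ᵥ eVec u := by rw [hspec.sum_eq_one]
        _ = ∑ r, E r *ᵥ eVec u := sum_mulVec' _ _ _
        _ = 0 := by simp [hall]
    have hcontr := congrFun he u
    simp [eVec] at hcontr
  have hcard1 : 1 ≤ (suppIdx E u).card := Finset.card_pos.2 h2
  have h3 : ecc X u = (suppIdx E u).card - 1 := hext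
  have hmaps : ∀ r ∈ suppIdx E u, θ r ∈ q.roots.toFinset := by
    intro r hr
    rw [Multiset.mem_toFinset, Polynomial.mem_roots']
    exact ⟨hq, hroot r hr⟩
  have hinj : Set.InjOn θ (suppIdx E u) := by
    intro a _ b _ hab
    by_contra hab'
    rcases lt_or_gt_of_ne hab' with h | h
    · exact absurd hab (ne_of_gt (hspec.strict_anti a b h))
    · exact absurd hab.symm (ne_of_gt (hspec.strict_anti b a h))
  have hcard2 : (suppIdx E u).card ≤ q.roots.toFinset.card :=
    Finset.card_le_card_of_injOn θ hmaps hinj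
  have hcard3 : q.roots.toFinset.card ≤ q.natDegree :=
    le_trans (Multiset.toFinset_card_le _) (Polynomial.card_roots' q)
  omega
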